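/- For every n ≥ 1, the sets K(L_{2n}) and K(L_{2n+1}) of base-phi representations of the Lucas numbers L_{2n} and L_{2n+1} satisfying the Knott condition are finite, and each has exactly 2n+1 elements. -/
import Mathlib


noncomputable section

open Finset

/-- The golden ratio φ = (1+√5)/2. -/
def goldenPhi : ℝ := (1 + Real.sqrt 5) / 2

/-- `a` is a base-phi representation of `N`: a finitely supported 0-1 digit
function on `ℤ` whose associated sum of powers of φ equals `N`. -/
def IsBasePhiRep (N : ℕ) (a : ℤ →₀ ℕ) : Prop :=
  (∀ i, a i ≤ 1) ∧ (N : ℝ) = ∑ i ∈ a.support, (a i : ℝ) * goldenPhi ^ i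

/-- `d` is the Bergman expansion of `N`: a base-phi representation with no
two consecutive digits equal to 1. -/
def IsBergman (N : ℕ) (d : ℤ →₀ ℕ) : Prop :=
  IsBasePhiRep N d ∧ ∀ i : ℤ, d i * d (i + 1) = 0

/-- The Knott condition: the expansion does not end in the digits 011, i.e.
letting `m` be the minimum of the support, not (a(m+1) = 1 and a(m+2) = 0). -/
def KnottCond (a : ℤ →₀ ℕ) : Prop :=
  ∀ m : ℤ, a.support.min = (m : WithTop ℤ) → ¬(a (m + 1) = 1 ∧ a (m + 2) = 0)

/-- The set of base-phi representations of `N` satisfying the Knott condition. -/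
def KnottSet (N : ℕ) : Set (ℤ →₀ ℕ) :=
  {a | IsBasePhiRep N a ∧ KnottCond a}

/-- `Flip a a'` : `a'` is obtained from `a` by a golden mean flip
`100 → 011` at some index `i`. -/
def Flip (a a' : ℤ →₀ ℕ) : Prop :=
  ∃ i : ℤ, a (i + 1) = 1 ∧ a i = 0 ∧ a (i - 1) = 0 ∧
    a' (i + 1) = 0 ∧ a' i = 1 ∧ a' (i - 1) = 1 ∧
    ∀ j : ℤ, j ≠ i + 1 → j ≠ i → j ≠ i - 1 → a' j = a j

/-- The Lucas numbers: L₀ = 2, L₁ = 1, L_{n+2} = L_{n+1} + L_n. -/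
def lucasNum : ℕ → ℕ
  | 0 => 2
  | 1 => 1
  | n + 2 => lucasNum (n + 1) + lucasNum n

/-- The number of representations of `M` as a sum of distinct Fibonacci
numbers `F_i` with `i ≥ 2`. -/
def TotFIB (M : ℕ) : ℕ :=
  {S : Finset ℕ | (∀ i ∈ S, 2 ≤ i) ∧ ∑ i ∈ S, Nat.fib i = M}.ncard



lemma sqrt5_pos : (0:ℝ) < Real.sqrt 5 := Real.sqrt_pos.mpr (by norm_num)
lemma sqrt5_sq : Real.sqrt 5 ^ 2 = 5 := Real.sq_sqrt (by norm_num)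
lemma sqrt5_gt : (2:ℝ) < Real.sqrt 5 := by nlinarith [sqrt5_sq, sqrt5_pos]
lemma one_lt_gp : 1 < goldenPhi := by unfold goldenPhi; nlinarith [sqrt5_gt]
lemma gp_pos : 0 < goldenPhi := lt_trans one_pos one_lt_gp
lemma gp_ne : goldenPhi ≠ 0 := ne_of_gt gp_pos
lemma gp_sq : goldenPhi ^ 2 = goldenPhi + 1 := by
  unfold goldenPhi; have := sqrt5_sq; ring_nf; nlinarith [sqrt5_sq]

/-- power of phi, integer exponent -/
def pw (i : ℤ) : ℝ := goldenPhi ^ i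

lemma pw_pos (i : ℤ) : 0 < pw i := zpow_pos gp_pos i
lemma pw_nonneg (i : ℤ) : 0 ≤ pw i := (pw_pos i).le
lemma pw_rec (c : ℤ) : pw (c + 2) = pw (c + 1) + pw c := by
  unfold pw
  have h1 : goldenPhi ^ (c + 2) = goldenPhi ^ c * goldenPhi ^ 2 := by
    rw [← zpow_natCast goldenPhi 2, ← zpow_add₀ gp_ne]; norm_num
  have h2 : goldenPhi ^ (c + 1) = goldenPhi ^ c * goldenPhi := by
    rw [zpow_add₀ gp_ne, zpow_one]
  rw [h1, h2, gp_sq]; ring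
lemma pw_lt_pw {a b : ℤ} (h : a < b) : pw a < pw b :=
  zpow_lt_zpow_right₀ one_lt_gp h
lemma pw_le_pw {a b : ℤ} (h : a ≤ b) : pw a ≤ pw b :=
  zpow_le_zpow_right₀ one_lt_gp.le h
lemma pw_lt_iff {a b : ℤ} : pw a < pw b ↔ a < b :=
  zpow_lt_zpow_iff_right₀ one_lt_gp
lemma pw_zero : pw 0 = 1 := zpow_zero _


lemma sum_Icc_pw (d : ℕ) : ∀ m : ℤ, ∑ i ∈ Icc m (m + d), pw i = pw (m + d + 2) - pw (m + 1) := by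
  induction d with
  | zero =>
    intro m
    simp only [Nat.cast_zero, add_zero, Finset.Icc_self, Finset.sum_singleton]
    linarith [pw_rec m]
  | succ d ih =>
    intro m
    have h1 : Icc m (m + (d+1 : ℕ)) = insert m (Icc (m+1) (m + 1 + d)) := by
      ext x; simp only [Finset.mem_Icc, Finset.mem_insert]; omega
    rw [h1, Finset.sum_insert (by simp only [Finset.mem_Icc]; omega), ih (m+1)]
    have h2 : (m + 1 + (d:ℤ) + 2) = (m + (d+1:ℕ) + 2) := by push_cast; ring
    have h3 : (m + 1 + 1 : ℤ) = m + 2 := by ring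
    rw [h2, h3]
    linarith [pw_rec m]

/-- general Icc sum, any endpoints -/
lemma sum_Icc_pw' (a b : ℤ) (h : a ≤ b) : ∑ i ∈ Icc a b, pw i = pw (b + 2) - pw (a + 1) := by
  obtain ⟨d, rfl⟩ : ∃ d : ℕ, b = a + d := ⟨(b - a).toNat, by omega⟩
  exact sum_Icc_pw d a

lemma sum_lt_pw_max {S : Finset ℤ} (h : S.Nonempty) :
    ∑ i ∈ S, pw i < pw (S.max' h + 2) := by
  have hsub : S ⊆ Icc (S.min' h) (S.max' h) := fun x hx =>
    Finset.mem_Icc.mpr ⟨S.min'_le x hx, S.le_max' x hx⟩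
  calc ∑ i ∈ S, pw i ≤ ∑ i ∈ Icc (S.min' h) (S.max' h), pw i :=
        Finset.sum_le_sum_of_subset_of_nonneg hsub (fun i _ _ => pw_nonneg i)
    _ = pw (S.max' h + 2) - pw (S.min' h + 1) :=
        sum_Icc_pw' _ _ (S.min'_le _ (S.max'_mem h))
    _ < pw (S.max' h + 2) := by linarith [pw_pos (S.min' h + 1)]

lemma pw_max_le_sum {S : Finset ℤ} (h : S.Nonempty) : pw (S.max' h) ≤ ∑ i ∈ S, pw i :=
  Finset.single_le_sum (fun i _ => pw_nonneg i) (S.max'_mem h)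

lemma sum_pw_pos {S : Finset ℤ} (h : S.Nonempty) : 0 < ∑ i ∈ S, pw i :=
  Finset.sum_pos (fun i _ => pw_pos i) h

lemma nonempty_of_sum_pos {S : Finset ℤ} {v : ℝ} (hv : 0 < v) (hs : ∑ i ∈ S, pw i = v) :
    S.Nonempty := by
  rcases S.eq_empty_or_nonempty with rfl | h
  · simp at hs; exact absurd hs (by linarith)
  · exact h

lemma sum_erase_max {S : Finset ℤ} (h : S.Nonempty) :
    ∑ i ∈ S.erase (S.max' h), pw i = (∑ i ∈ S, pw i) - pw (S.max' h) := by
  have := Finset.sum_erase_add S pw (S.max'_mem h)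
  linarith



/-- the "descending chain" set: Dset c 0 = {c}, Dset c (j+1) = {c-1} ∪ Dset (c-2) j -/
def Dset (c : ℤ) : ℕ → Finset ℤ
  | 0 => {c}
  | j + 1 => insert (c - 1) (Dset (c - 2) j)

lemma Dset_mem_le {c : ℤ} {j : ℕ} {i : ℤ} (h : i ∈ Dset c j) : i ≤ c := by
  induction j generalizing c i with
  | zero => simp [Dset] at h; omega
  | succ j ih =>
    simp only [Dset, Finset.mem_insert] at h
    rcases h with rfl | h
    · omega
    · have := ih h; omega

lemma Dset_mem_le' {c : ℤ} {j : ℕ} (hj : 1 ≤ j) {i : ℤ} (h : i ∈ Dset c j) : i ≤ c - 1 := by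
  obtain ⟨j, rfl⟩ : ∃ j', j = j' + 1 := ⟨j - 1, by omega⟩
  simp only [Dset, Finset.mem_insert] at h
  rcases h with rfl | h
  · omega
  · have := Dset_mem_le h; omega

lemma Dset_mem_ge {c : ℤ} {j : ℕ} {i : ℤ} (h : i ∈ Dset c j) : c - 2 * j ≤ i := by
  induction j generalizing c i with
  | zero => simp [Dset] at h; omega
  | succ j ih =>
    simp only [Dset, Finset.mem_insert] at h
    rcases h with rfl | h
    · omega
    · have := ih h; push_cast; omega

lemma Dset_bot_mem (c : ℤ) (j : ℕ) : c - 2 * j ∈ Dset c j := by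
  induction j generalizing c with
  | zero => simp [Dset]
  | succ j ih =>
    simp only [Dset, Finset.mem_insert]
    right
    have := ih (c - 2)
    have he : c - 2 - 2 * j = c - 2 * (j + 1 : ℕ) := by push_cast; ring
    rwa [he] at this

lemma Dset_penult_mem (c : ℤ) {j : ℕ} (hj : 1 ≤ j) : c - 2 * j + 1 ∈ Dset c j := by
  induction j generalizing c with
  | zero => omega
  | succ j ih =>
    simp only [Dset, Finset.mem_insert]
    rcases Nat.eq_zero_or_pos j with rfl | hj'
    · left; push_cast; ring
    · right
      have := ih (c := c - 2) hj'
      have he : c - 2 - 2 * j + 1 = c - 2 * (j + 1 : ℕ) + 1 := by push_cast; ring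
      rwa [he] at this

lemma Dset_no_penult2 (c : ℤ) {j : ℕ} (hj : 2 ≤ j) : c - 2 * j + 2 ∉ Dset c j := by
  induction j generalizing c with
  | zero => omega
  | succ j ih =>
    simp only [Dset, Finset.mem_insert]
    push_neg
    constructor
    · push_cast; omega
    · rcases Nat.lt_or_ge j 2 with hj' | hj'
      · -- j = 1 : Dset (c-2) 1 = {c-3, c-4}; c - 2*2 + 2 = c - 2
        interval_cases j
        · omega
        · intro h
          simp only [Dset, Finset.mem_insert, Finset.mem_singleton] at h
          push_cast at h; omega
      · intro h
        have := ih (c := c - 2) hj'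
        have he : c - 2 - 2 * j + 2 = c - 2 * (j + 1 : ℕ) + 2 := by push_cast; ring
        rw [he] at this
        exact this h

lemma Dset_sum (c : ℤ) (j : ℕ) : ∑ i ∈ Dset c j, pw i = pw c := by
  induction j generalizing c with
  | zero => simp [Dset]
  | succ j ih =>
    have hnot : c - 1 ∉ Dset (c - 2) j := fun h => by have := Dset_mem_le h; omega
    simp only [Dset]
    rw [Finset.sum_insert hnot, ih (c - 2)]
    have := pw_rec (c - 2)
    have h1 : c - 2 + 2 = c := by ring
    have h2 : c - 2 + 1 = c - 1 := by ring
    rw [h1, h2] at this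
    linarith

lemma Dset_card (c : ℤ) (j : ℕ) : (Dset c j).card = j + 1 := by
  induction j generalizing c with
  | zero => simp [Dset]
  | succ j ih =>
    have hnot : c - 1 ∉ Dset (c - 2) j := fun h => by have := Dset_mem_le h; omega
    simp [Dset, Finset.card_insert_of_notMem hnot, ih]


lemma Dset_zero (c : ℤ) : Dset c 0 = {c} := rfl
lemma Dset_succ (c : ℤ) (j : ℕ) : Dset c (j+1) = insert (c - 1) (Dset (c - 2) j) := rfl
lemma Dset_one (c : ℤ) : Dset c 1 = {c-1, c-2} := rfl



/-- E1: classification of representations of a pure power -/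
lemma E1 : ∀ (N : ℕ) (S : Finset ℤ), S.card = N → ∀ c : ℤ,
    (∑ i ∈ S, pw i = pw c) → ∃ j, S = Dset c j := by
  intro N
  induction N using Nat.strong_induction_on with
  | _ N ih =>
    intro S hcard c hsum
    have hne : S.Nonempty := nonempty_of_sum_pos (pw_pos c) hsum
    set M := S.max' hne with hM
    have hMle : M ≤ c := by
      by_contra h
      push_neg at h
      have := pw_max_le_sum hne
      rw [hsum] at this
      exact absurd this (not_le.mpr (pw_lt_pw h))
    have hMge : c - 1 ≤ M := by
      by_contra h
      push_neg at h
      have h2 := sum_lt_pw_max hne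
      rw [hsum] at h2
      have : pw c < pw c := lt_of_lt_of_le h2 (pw_le_pw (by omega))
      exact lt_irrefl _ this
    rcases (by omega : M = c ∨ M = c - 1) with hMc | hMc
    · -- S = {c}
      have hz : ∑ i ∈ S.erase M, pw i = 0 := by
        rw [sum_erase_max hne, hsum]; rw [← hM, hMc]; ring
      have hempty : S.erase M = ∅ := by
        by_contra h
        have := sum_pw_pos (Finset.nonempty_of_ne_empty h)
        linarith
      refine ⟨0, ?_⟩
      rw [Dset_zero]
      have : S = insert M (S.erase M) := (Finset.insert_erase (S.max'_mem hne)).symm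
      rw [this, hempty, hMc]; rfl
    · -- M = c - 1
      have hsum' : ∑ i ∈ S.erase M, pw i = pw (c - 2) := by
        rw [sum_erase_max hne, hsum]
        rw [← hM, hMc]
        have := pw_rec (c - 2)
        have h1 : c - 2 + 2 = c := by ring
        have h2 : c - 2 + 1 = c - 1 := by ring
        rw [h1, h2] at this
        linarith
      have hclt : (S.erase M).card < N := by
        rw [← hcard]
        exact Finset.card_erase_lt_of_mem (S.max'_mem hne)
      obtain ⟨j, hj⟩ := ih _ hclt _ rfl _ hsum'
      refine ⟨j + 1, ?_⟩
      rw [Dset_succ]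
      have : S = insert M (S.erase M) := (Finset.insert_erase (S.max'_mem hne)).symm
      rw [this, hj, hMc]

lemma E1' {S : Finset ℤ} {c : ℤ} (hsum : ∑ i ∈ S, pw i = pw c) : ∃ j, S = Dset c j :=
  E1 S.card S rfl c hsum

/-- E2: classification of representations of 2·φ^c with support ≤ c -/
lemma E2 {S : Finset ℤ} {c : ℤ} (hb : ∀ i ∈ S, i ≤ c)
    (hsum : ∑ i ∈ S, pw i = 2 * pw c) : ∃ j, 1 ≤ j ∧ S = insert c (Dset c j) := by
  have hne : S.Nonempty := nonempty_of_sum_pos (by linarith [pw_pos c]) hsum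
  set M := S.max' hne with hM
  have hMle : M ≤ c := hb _ (S.max'_mem hne)
  have hMge : c ≤ M := by
    by_contra h
    push_neg at h
    have h2 := sum_lt_pw_max hne
    rw [hsum] at h2
    have h3 : pw (M + 2) ≤ pw (c + 1) := pw_le_pw (by omega)
    -- 2 * pw c < pw (c+1) = contradiction since pw(c+1) < pw(c+2) = pw(c+1)+pw(c) means pw(c+1) < 2 pw c? 
    have hr := pw_rec (c - 1)
    have e1 : c - 1 + 2 = c + 1 := by ring
    have e2 : c - 1 + 1 = c := by ring
    rw [e1, e2] at hr
    have := pw_lt_pw (show c - 1 < c by omega)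
    linarith
  have hMc : M = c := le_antisymm hMle hMge
  have hsum' : ∑ i ∈ S.erase M, pw i = pw c := by
    rw [sum_erase_max hne, hsum]; rw [← hM, hMc]; ring
  obtain ⟨j, hj⟩ := E1' hsum'
  have hj1 : 1 ≤ j := by
    rcases Nat.eq_zero_or_pos j with rfl | h
    · exfalso
      rw [Dset_zero] at hj
      have : c ∈ S.erase M := by rw [hj]; exact Finset.mem_singleton_self c
      have := Finset.ne_of_mem_erase this
      rw [hMc] at this
      exact this rfl
    · exact h
  refine ⟨j, hj1, ?_⟩
  have : S = insert M (S.erase M) := (Finset.insert_erase (S.max'_mem hne)).symm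
  rw [this, hj, hMc]



lemma lt_of_pw_lt {a b : ℤ} (h : pw a < pw b) : a < b := by
  by_contra hc
  push_neg at hc
  exact absurd (pw_le_pw hc) (not_le.mpr h)

/-- if pw c < v < pw (c+1) fails... : max is c or c-1 when pw c < v < pw (c+1) -/
lemma max_two_cases {S : Finset ℤ} (hne : S.Nonempty) {v : ℝ}
    (hsum : ∑ i ∈ S, pw i = v) {c : ℤ} (h1 : v < pw (c + 1)) (h2 : pw c < v) :
    S.max' hne = c ∨ S.max' hne = c - 1 := by
  have hMle : S.max' hne ≤ c := by
    have := pw_max_le_sum hne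
    rw [hsum] at this
    have := lt_of_pw_lt (lt_of_le_of_lt this h1)
    omega
  have hMge : c - 1 ≤ S.max' hne := by
    have h3 := sum_lt_pw_max hne
    rw [hsum] at h3
    have := lt_of_pw_lt (lt_trans h2 h3)
    omega
  omega

def Odds (t : ℤ) (k : ℕ) : Finset ℤ := (range k).image (fun i : ℕ => 2*t - 1 - 2*(i:ℤ))

lemma Odds_zero (t : ℤ) : Odds t 0 = ∅ := by simp [Odds]

lemma Odds_succ (t : ℤ) (k : ℕ) : Odds t (k+1) = insert (2*t - 1) (Odds (t-1) k) := by
  ext x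
  simp only [Odds, Finset.mem_image, Finset.mem_range, Finset.mem_insert]
  constructor
  · rintro ⟨i, hi, rfl⟩
    rcases Nat.eq_zero_or_pos i with rfl | hpos
    · left; push_cast; ring
    · right
      exact ⟨i - 1, by omega, by push_cast; omega⟩
  · rintro (h | ⟨i, hi, rfl⟩)
    · exact ⟨0, by omega, by push_cast; omega⟩
    · exact ⟨i + 1, by omega, by push_cast; ring⟩

lemma Odds_mem {t : ℤ} {k : ℕ} {x : ℤ} (h : x ∈ Odds t k) :
    ∃ i : ℕ, i < k ∧ x = 2*t - 1 - 2*(i:ℤ) := by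
  simp only [Odds, Finset.mem_image, Finset.mem_range] at h
  obtain ⟨i, hi, hx⟩ := h
  exact ⟨i, hi, hx.symm⟩

/-- E3 : classification of representations of φ^{2t} + φ^{-2n}, t = 1-n+d -/
lemma E3 (n : ℤ) : ∀ d : ℕ, ∀ S : Finset ℤ,
    ∑ i ∈ S, pw i = pw (2*(1-n+d)) + pw (-2*n) →
    (∃ k j : ℕ, k ≤ d ∧
      S = Odds (1-n+d) k ∪ insert (2*(1-n+d) - 2*k) (Dset (-2*n) j)) ∨
    (∃ j : ℕ, 1 ≤ j ∧ S = Odds (1-n+d) (d+1) ∪ insert (-2*n) (Dset (-2*n) j)) := by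
  intro d
  induction d with
  | zero =>
    intro S hsum
    set t : ℤ := 1 - n + (0:ℕ) with ht
    have hne : S.Nonempty := nonempty_of_sum_pos (add_pos (pw_pos _) (pw_pos _)) hsum
    have hrec := pw_rec (2*t - 1)
    have e1 : 2*t - 1 + 2 = 2*t + 1 := by ring
    have e2 : 2*t - 1 + 1 = 2*t := by ring
    rw [e1, e2] at hrec
    have hcases : S.max' hne = 2*t ∨ S.max' hne = 2*t - 1 := by
      apply max_two_cases hne hsum
      · -- pw (2t) + pw(-2n) < pw (2t+1) = pw(2t) + pw(2t-1)
        have : pw (-2*n) < pw (2*t - 1) := pw_lt_pw (by omega)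
        linarith
      · linarith [pw_pos (-2*n)]
    have hSi : S = insert (S.max' hne) (S.erase (S.max' hne)) :=
      (Finset.insert_erase (S.max'_mem hne)).symm
    rcases hcases with hM | hM
    · -- max = 2t, rest = pw (-2n)
      have hrest : ∑ i ∈ S.erase (S.max' hne), pw i = pw (-2*n) := by
        rw [sum_erase_max hne, hsum, hM]; ring
      obtain ⟨j, hj⟩ := E1' hrest
      left
      refine ⟨0, j, le_refl _, ?_⟩
      rw [Odds_zero, Finset.empty_union]
      rw [hSi, hj, hM]
      norm_num
    · -- max = 2t-1 = 1-2n : rest = 2 pw(-2n)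
      have hrest : ∑ i ∈ S.erase (S.max' hne), pw i = 2 * pw (-2*n) := by
        rw [sum_erase_max hne, hsum, hM]
        have hrec2 := pw_rec (-2*n)
        have e3 : -2*n + 2 = 2*t := by push_cast [ht]; ring
        have e4 : -2*n + 1 = 2*t - 1 := by push_cast [ht]; ring
        rw [e3, e4] at hrec2
        linarith
      have hb : ∀ i ∈ S.erase (S.max' hne), i ≤ -2*n := by
        intro i hi
        have h1 := S.le_max' i (Finset.mem_of_mem_erase hi)
        have h2 := Finset.ne_of_mem_erase hi
        rw [hM] at h1 h2
        have : (2:ℤ)*t - 1 = 1 - 2*n := by push_cast [ht]; ring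
        omega
      obtain ⟨j, hj1, hj⟩ := E2 hb hrest
      right
      refine ⟨j, hj1, ?_⟩
      rw [hSi, hj, hM]
      rw [show (0:ℕ) + 1 = 1 from rfl,
        show Odds t 1 = {2*t - 1} by rw [show (1:ℕ) = 0 + 1 from rfl, Odds_succ, Odds_zero]; rfl]
      rw [← Finset.insert_eq]
  | succ d ih =>
    intro S hsum
    set t : ℤ := 1 - n + ((d:ℤ) + 1) with ht
    have ht' : (1 - n + ((d+1 : ℕ) : ℤ)) = t := by push_cast [ht]; ring
    rw [show (2*(1-n+((d+1:ℕ):ℤ))) = 2*t by rw [ht']] at hsum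
    have hne : S.Nonempty := nonempty_of_sum_pos (add_pos (pw_pos _) (pw_pos _)) hsum
    have hrec := pw_rec (2*t - 1)
    have e1 : 2*t - 1 + 2 = 2*t + 1 := by ring
    have e2 : 2*t - 1 + 1 = 2*t := by ring
    rw [e1, e2] at hrec
    have hcases : S.max' hne = 2*t ∨ S.max' hne = 2*t - 1 := by
      apply max_two_cases hne hsum
      · have : pw (-2*n) < pw (2*t - 1) := pw_lt_pw (by omega)
        linarith
      · linarith [pw_pos (-2*n)]
    have hSi : S = insert (S.max' hne) (S.erase (S.max' hne)) :=
      (Finset.insert_erase (S.max'_mem hne)).symm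
    rcases hcases with hM | hM
    · have hrest : ∑ i ∈ S.erase (S.max' hne), pw i = pw (-2*n) := by
        rw [sum_erase_max hne, hsum, hM]; ring
      obtain ⟨j, hj⟩ := E1' hrest
      left
      refine ⟨0, j, by omega, ?_⟩
      rw [ht', Odds_zero, Finset.empty_union]
      rw [hSi, hj, hM]
      norm_num
    · -- max = 2t - 1, rest = pw (2(t-1)) + pw (-2n), apply ih
      have hrest : ∑ i ∈ S.erase (S.max' hne), pw i = pw (2*(1-n+(d:ℤ))) + pw (-2*n) := by
        rw [sum_erase_max hne, hsum, hM]
        have hrec2 := pw_rec (2*t - 2)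
        have e3 : 2*t - 2 + 2 = 2*t := by ring
        have e4 : 2*t - 2 + 1 = 2*t - 1 := by ring
        rw [e3, e4] at hrec2
        have e5 : 2*(1 - n + (d:ℤ)) = 2*t - 2 := by rw [ht]; ring
        rw [e5]
        linarith
      rcases ih _ hrest with ⟨k, j, hk, hS'⟩ | ⟨j, hj1, hS'⟩
      · left
        refine ⟨k + 1, j, by omega, ?_⟩
        rw [hSi, hS', hM, ht']
        rw [← Finset.insert_union]
        have e6 : (1 - n + (d:ℤ)) = t - 1 := by rw [ht]; ring
        rw [e6, ← Odds_succ]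
        congr 2
        push_cast
        ring
      · right
        refine ⟨j, hj1, ?_⟩
        rw [hSi, hS', hM, ht']
        rw [← Finset.insert_union]
        have e6 : (1 - n + (d:ℤ)) = t - 1 := by rw [ht]; ring
        rw [e6, ← Odds_succ]



def Evens (t : ℤ) (k : ℕ) : Finset ℤ := (range k).image (fun i : ℕ => 2*t - 2*(i:ℤ))

lemma Evens_zero (t : ℤ) : Evens t 0 = ∅ := by simp [Evens]

lemma Evens_succ (t : ℤ) (k : ℕ) : Evens t (k+1) = insert (2*t) (Evens (t-1) k) := by
  ext x
  simp only [Evens, Finset.mem_image, Finset.mem_range, Finset.mem_insert]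
  constructor
  · rintro ⟨i, hi, rfl⟩
    rcases Nat.eq_zero_or_pos i with rfl | hpos
    · left; push_cast; ring
    · right; exact ⟨i - 1, by omega, by push_cast; omega⟩
  · rintro (h | ⟨i, hi, rfl⟩)
    · exact ⟨0, by omega, by push_cast; omega⟩
    · exact ⟨i + 1, by omega, by push_cast; ring⟩

lemma Evens_mem {t : ℤ} {k : ℕ} {x : ℤ} (h : x ∈ Evens t k) :
    ∃ i : ℕ, i < k ∧ x = 2*t - 2*(i:ℤ) := by
  simp only [Evens, Finset.mem_image, Finset.mem_range] at h
  obtain ⟨i, hi, hx⟩ := h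
  exact ⟨i, hi, hx.symm⟩

/-- OF : forced-block lemma. value φ^m − φ^{-2n-1} where m = -2n+1+d, support ≤ m−2 -/
lemma OF (n : ℤ) : ∀ d : ℕ, ∀ S : Finset ℤ,
    (∀ i ∈ S, i ≤ (-2*n+1+(d:ℤ)) - 2) →
    ∑ i ∈ S, pw i = pw (-2*n+1+(d:ℤ)) - pw (-2*n-1) →
    ∃ j, 1 ≤ j ∧ S = Icc (-2*n) (-2*n-1+(d:ℤ)) ∪ Dset (-2*n) j := by
  intro d
  induction d with
  | zero =>
    intro S hb hsum
    have hrec := pw_rec (-2*n-1)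
    have e1 : -2*n-1+2 = -2*n+1+((0:ℕ):ℤ) := by push_cast; ring
    have e2 : -2*n-1+1 = -2*n := by ring
    rw [e1, e2] at hrec
    have hsum' : ∑ i ∈ S, pw i = pw (-2*n) := by rw [hsum]; linarith
    obtain ⟨j, hj⟩ := E1' hsum'
    have hj1 : 1 ≤ j := by
      rcases Nat.eq_zero_or_pos j with rfl | h
      · exfalso
        rw [Dset_zero] at hj
        have : -2*n ∈ S := by rw [hj]; exact Finset.mem_singleton_self _
        have := hb _ this
        omega
      · exact h
    refine ⟨j, hj1, ?_⟩
    rw [show Icc (-2*n) (-2*n-1+((0:ℕ):ℤ)) = (∅ : Finset ℤ) from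
      Finset.Icc_eq_empty (by push_cast; omega), Finset.empty_union]
    exact hj
  | succ d ih =>
    intro S hb hsum
    set m : ℤ := -2*n+1+((d:ℤ)+1) with hm
    have hmc : (-2*n+1+((d+1:ℕ):ℤ)) = m := by push_cast [hm]; ring
    rw [hmc] at hsum hb
    have hvpos : (0:ℝ) < pw m - pw (-2*n-1) := by
      have : pw (-2*n-1) < pw m := pw_lt_pw (by omega)
      linarith
    have hne : S.Nonempty := nonempty_of_sum_pos hvpos hsum
    have hMle : S.max' hne ≤ m - 2 := hb _ (S.max'_mem hne)
    have hMge : m - 2 ≤ S.max' hne := by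
      have h3 := sum_lt_pw_max hne
      rw [hsum] at h3
      have h4 : pw (m-1) < pw m - pw (-2*n-1) := by
        have hrec := pw_rec (m-2)
        have e1 : m-2+2 = m := by ring
        have e2 : m-2+1 = m-1 := by ring
        rw [e1, e2] at hrec
        have : pw (-2*n-1) < pw (m-2) := pw_lt_pw (by omega)
        linarith
      have := lt_of_pw_lt (lt_trans h4 h3)
      omega
    have hM : S.max' hne = m - 2 := le_antisymm hMle hMge
    have hSi : S = insert (S.max' hne) (S.erase (S.max' hne)) :=
      (Finset.insert_erase (S.max'_mem hne)).symm
    have hrest : ∑ i ∈ S.erase (S.max' hne), pw i = pw (-2*n+1+(d:ℤ)) - pw (-2*n-1) := by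
      rw [sum_erase_max hne, hsum, hM]
      have hrec := pw_rec (m-2)
      have e1 : m-2+2 = m := by ring
      have e2 : m-2+1 = m-1 := by ring
      rw [e1, e2] at hrec
      have e3 : -2*n+1+(d:ℤ) = m - 1 := by rw [hm]; ring
      rw [e3]
      linarith
    have hrb : ∀ i ∈ S.erase (S.max' hne), i ≤ (-2*n+1+(d:ℤ)) - 2 := by
      intro i hi
      have h1 := S.le_max' i (Finset.mem_of_mem_erase hi)
      have h2 := Finset.ne_of_mem_erase hi
      rw [hM] at h1 h2
      omega
    obtain ⟨j, hj1, hj⟩ := ih _ hrb hrest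
    refine ⟨j, hj1, ?_⟩
    rw [hSi, hj, hM]
    rw [← Finset.insert_union]
    congr 1
    ext x
    simp only [Finset.mem_insert, Finset.mem_Icc]
    push_cast
    omega

/-- OFr : free-state lemma. value φ^{2t+1} − φ^{-2n-1} where t = e−n -/
lemma OFr (n : ℤ) : ∀ e : ℕ, ∀ S : Finset ℤ,
    ∑ i ∈ S, pw i = pw (2*((e:ℤ)-n)+1) - pw (-2*n-1) →
    (∃ j, S = Evens ((e:ℤ)-n) e ∪ Dset (-2*n) j) ∨
    (∃ k j : ℕ, k < e ∧ 1 ≤ j ∧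
      S = Evens ((e:ℤ)-n) k ∪ (Icc (-2*n) (2*(((e:ℤ)-n)-(k:ℤ))-1) ∪ Dset (-2*n) j)) := by
  intro e
  induction e with
  | zero =>
    intro S hsum
    have hrec := pw_rec (-2*n-1)
    have e1 : -2*n-1+2 = 2*(((0:ℕ):ℤ)-n)+1 := by push_cast; ring
    have e2 : -2*n-1+1 = -2*n := by ring
    rw [e1, e2] at hrec
    have hsum' : ∑ i ∈ S, pw i = pw (-2*n) := by rw [hsum]; linarith
    obtain ⟨j, hj⟩ := E1' hsum'
    left
    exact ⟨j, by rw [Evens_zero, Finset.empty_union]; exact hj⟩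
  | succ e ih =>
    intro S hsum
    set t : ℤ := ((e:ℤ)+1) - n with htd
    have htc : (((e+1:ℕ):ℤ) - n) = t := by push_cast [htd]; ring
    rw [show (2*(((e+1:ℕ):ℤ)-n)+1) = 2*t+1 by rw [htc]] at hsum
    have hvpos : (0:ℝ) < pw (2*t+1) - pw (-2*n-1) := by
      have : pw (-2*n-1) < pw (2*t+1) := pw_lt_pw (by omega)
      linarith
    have hne : S.Nonempty := nonempty_of_sum_pos hvpos hsum
    have hrec1 := pw_rec (2*t-1)
    have e1 : 2*t-1+2 = 2*t+1 := by ring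
    have e2 : 2*t-1+1 = 2*t := by ring
    rw [e1, e2] at hrec1
    have hcases : S.max' hne = 2*t ∨ S.max' hne = 2*t - 1 := by
      apply max_two_cases hne hsum
      · linarith [pw_pos (-2*n-1)]
      · have : pw (-2*n-1) < pw (2*t-1) := pw_lt_pw (by omega)
        linarith
    have hSi : S = insert (S.max' hne) (S.erase (S.max' hne)) :=
      (Finset.insert_erase (S.max'_mem hne)).symm
    rcases hcases with hM | hM
    · -- max = 2t : recurse with ih
      have hrest : ∑ i ∈ S.erase (S.max' hne), pw i = pw (2*((e:ℤ)-n)+1) - pw (-2*n-1) := by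
        rw [sum_erase_max hne, hsum, hM]
        have e3 : 2*((e:ℤ)-n)+1 = 2*t-1 := by rw [htd]; ring
        rw [e3]
        linarith
      have e6 : ((e:ℤ) - n) = t - 1 := by rw [htd]; ring
      rcases ih _ hrest with ⟨j, hS'⟩ | ⟨k, j, hk, hj1, hS'⟩
      · left
        refine ⟨j, ?_⟩
        rw [hSi, hS', hM, htc, e6, ← Finset.insert_union, ← Evens_succ]
      · right
        refine ⟨k+1, j, by omega, hj1, ?_⟩
        rw [hSi, hS', hM, htc, e6, ← Finset.insert_union, ← Evens_succ]
        congr 3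
        push_cast
        ring
    · -- max = 2t-1 : apply OF
      have hrest : ∑ i ∈ S.erase (S.max' hne), pw i = pw (-2*n+1+((2*e+1:ℕ):ℤ)) - pw (-2*n-1) := by
        rw [sum_erase_max hne, hsum, hM]
        have e3 : -2*n+1+((2*e+1:ℕ):ℤ) = 2*t := by push_cast [htd]; ring
        rw [e3]
        linarith
      have hrb : ∀ i ∈ S.erase (S.max' hne), i ≤ (-2*n+1+((2*e+1:ℕ):ℤ)) - 2 := by
        intro i hi
        have h1 := S.le_max' i (Finset.mem_of_mem_erase hi)
        have h2 := Finset.ne_of_mem_erase hi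
        rw [hM] at h1 h2
        push_cast [htd]
        push_cast [htd] at h1 h2
        omega
      obtain ⟨j, hj1, hj⟩ := OF n (2*e+1) _ hrb hrest
      right
      refine ⟨0, j, by omega, hj1, ?_⟩
      rw [hSi, hj, hM, htc, Evens_zero, Finset.empty_union]
      rw [← Finset.insert_union]
      congr 1
      ext x
      simp only [Finset.mem_insert, Finset.mem_Icc]
      push_cast
      omega



lemma Odds_mem' {t : ℤ} {k : ℕ} {x : ℤ} :
    x ∈ Odds t k ↔ ∃ i : ℕ, i < k ∧ x = 2*t - 1 - 2*(i:ℤ) := by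
  simp only [Odds, Finset.mem_image, Finset.mem_range]
  constructor
  · rintro ⟨i, hi, hx⟩; exact ⟨i, hi, hx.symm⟩
  · rintro ⟨i, hi, hx⟩; exact ⟨i, hi, hx.symm⟩

lemma Evens_mem' {t : ℤ} {k : ℕ} {x : ℤ} :
    x ∈ Evens t k ↔ ∃ i : ℕ, i < k ∧ x = 2*t - 2*(i:ℤ) := by
  simp only [Evens, Finset.mem_image, Finset.mem_range]
  constructor
  · rintro ⟨i, hi, hx⟩; exact ⟨i, hi, hx.symm⟩
  · rintro ⟨i, hi, hx⟩; exact ⟨i, hi, hx.symm⟩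

lemma Odds_card (t : ℤ) (k : ℕ) : (Odds t k).card = k := by
  rw [Odds, Finset.card_image_of_injOn, Finset.card_range]
  intro a _ b _ h
  simp only [] at h
  omega

lemma Evens_card (t : ℤ) (k : ℕ) : (Evens t k).card = k := by
  rw [Evens, Finset.card_image_of_injOn, Finset.card_range]
  intro a _ b _ h
  simp only [] at h
  omega

lemma Odds_sum (t : ℤ) (k : ℕ) : ∑ i ∈ Odds t k, pw i = pw (2*t) - pw (2*t - 2*k) := by
  induction k generalizing t with
  | zero => rw [Odds_zero]; simp
  | succ k ih =>
    rw [Odds_succ, Finset.sum_insert (by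
      rw [Odds_mem']; rintro ⟨i, hi, h⟩; omega)]
    rw [ih (t-1)]
    have hrec := pw_rec (2*t - 2)
    have e1 : 2*t-2+2 = 2*t := by ring
    have e2 : 2*t-2+1 = 2*t-1 := by ring
    rw [e1, e2] at hrec
    have e3 : 2*(t-1) = 2*t - 2 := by ring
    have e4 : 2*(t-1) - 2*(k:ℤ) = 2*t - 2*((k+1:ℕ):ℤ) := by push_cast; ring
    rw [e3, e4] at *
    linarith

lemma Evens_sum (t : ℤ) (k : ℕ) :
    ∑ i ∈ Evens t k, pw i = pw (2*t+1) - pw (2*(t-(k:ℤ))+1) := by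
  induction k generalizing t with
  | zero => rw [Evens_zero]; simp
  | succ k ih =>
    rw [Evens_succ, Finset.sum_insert (by
      rw [Evens_mem']; rintro ⟨i, hi, h⟩; omega)]
    rw [ih (t-1)]
    have hrec := pw_rec (2*t - 1)
    have e1 : 2*t-1+2 = 2*t+1 := by ring
    have e2 : 2*t-1+1 = 2*t := by ring
    rw [e1, e2] at hrec
    have e3 : 2*(t-1)+1 = 2*t - 1 := by ring
    have e4 : 2*((t-1)-(k:ℤ))+1 = 2*(t-((k+1:ℕ):ℤ))+1 := by push_cast; ring
    rw [e3, e4] at *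
    linarith

/-- appending at the bottom -/
lemma Evens_bot (t : ℤ) (k : ℕ) : Evens t (k+1) = Evens t k ∪ {2*t - 2*(k:ℤ)} := by
  ext x
  rw [Finset.mem_union, Finset.mem_singleton, Evens_mem', Evens_mem']
  constructor
  · rintro ⟨i, hi, rfl⟩
    rcases Nat.lt_or_ge i k with h | h
    · exact Or.inl ⟨i, h, rfl⟩
    · right; have : i = k := by omega
      rw [this]
  · rintro (⟨i, hi, rfl⟩ | rfl)
    · exact ⟨i, by omega, rfl⟩
    · exact ⟨k, by omega, rfl⟩

lemma min_eq_of {S : Finset ℤ} {x : ℤ} (hx : x ∈ S) (hall : ∀ i ∈ S, x ≤ i) :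
    S.min = (x : WithTop ℤ) := by
  apply le_antisymm
  · exact Finset.min_le hx
  · exact Finset.le_min (fun y hy => WithTop.coe_le_coe.mpr (hall y hy))

lemma min_unique {S : Finset ℤ} {x m : ℤ} (hx : x ∈ S) (hall : ∀ i ∈ S, x ≤ i)
    (hm : S.min = (m : WithTop ℤ)) : m = x := by
  rw [min_eq_of hx hall] at hm
  exact_mod_cast hm.symm



def KnottF (S : Finset ℤ) : Prop :=
  ∀ m : ℤ, S.min = (m : WithTop ℤ) → ¬((m+1) ∈ S ∧ (m+2) ∉ S)

lemma kill₂ {S : Finset ℤ} {c : ℤ} {j : ℕ} (hj : 2 ≤ j) (hk : KnottF S)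
    (hsub : Dset c j ⊆ S) (habove : ∀ i ∈ S, i ∉ Dset c j → c ≤ i) : False := by
  have hmem : c - 2*(j:ℤ) ∈ S := hsub (Dset_bot_mem c j)
  have hall : ∀ i ∈ S, c - 2*(j:ℤ) ≤ i := by
    intro i hi
    by_cases h : i ∈ Dset c j
    · exact Dset_mem_ge h
    · have := habove i hi h; omega
  refine hk (c - 2*(j:ℤ)) (min_eq_of hmem hall) ⟨hsub (Dset_penult_mem c (by omega)), ?_⟩
  intro hcon
  by_cases h : c - 2*(j:ℤ) + 2 ∈ Dset c j
  · exact Dset_no_penult2 c hj h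
  · have := habove _ hcon h; omega

lemma kill₁ {S : Finset ℤ} {c : ℤ} (hk : KnottF S)
    (hsub : Dset c 1 ⊆ S) (habove : ∀ i ∈ S, i ∉ Dset c 1 → c ≤ i) (hc : c ∉ S) : False := by
  have hmem : c - 2*((1:ℕ):ℤ) ∈ S := hsub (Dset_bot_mem c 1)
  have hall : ∀ i ∈ S, c - 2*((1:ℕ):ℤ) ≤ i := by
    intro i hi
    by_cases h : i ∈ Dset c 1
    · exact Dset_mem_ge h
    · have := habove i hi h; push_cast; omega
  refine hk (c - 2*((1:ℕ):ℤ)) (min_eq_of hmem hall) ⟨hsub (Dset_penult_mem c (by omega)), ?_⟩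
  intro hcon
  have : c - 2*((1:ℕ):ℤ) + 2 = c := by push_cast; ring
  rw [this] at hcon
  exact hc hcon

def evF (n k : ℕ) : Finset ℤ :=
  if k = 2*n then Odds (n:ℤ) (2*n) ∪ {(-2*(n:ℤ)), -2*(n:ℤ)-1, -2*(n:ℤ)-2}
  else Odds (n:ℤ) k ∪ {2*(n:ℤ)-2*(k:ℤ), -2*(n:ℤ)}

def odF (n k : ℕ) : Finset ℤ :=
  if k = 2*n then Evens (n:ℤ) (2*n+1)
  else Evens (n:ℤ) k ∪ Icc (-2*(n:ℤ)-2) (2*((n:ℤ)-(k:ℤ))-1)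

lemma evF_sum {n k : ℕ} (hn : 1 ≤ n) (hk : k ≤ 2*n) :
    ∑ i ∈ evF n k, pw i = pw (2*(n:ℤ)) + pw (-2*(n:ℤ)) := by
  by_cases h : k = 2*n
  · rw [evF, if_pos h]
    have hdisj : Disjoint (Odds (n:ℤ) (2*n)) {(-2*(n:ℤ)), -2*(n:ℤ)-1, -2*(n:ℤ)-2} := by
      rw [Finset.disjoint_left]
      intro x hx hx2
      rw [Odds_mem'] at hx
      obtain ⟨i, hi, rfl⟩ := hx
      simp only [Finset.mem_insert, Finset.mem_singleton] at hx2
      omega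
    rw [Finset.sum_union hdisj, Odds_sum]
    have e1 : 2*(n:ℤ) - 2*((2*n:ℕ):ℤ) = -2*(n:ℤ) := by push_cast; ring
    rw [e1]
    have htr : ∑ i ∈ ({(-2*(n:ℤ)), -2*(n:ℤ)-1, -2*(n:ℤ)-2} : Finset ℤ), pw i
        = pw (-2*(n:ℤ)) + pw (-2*(n:ℤ)-1) + pw (-2*(n:ℤ)-2) := by
      rw [Finset.sum_insert (by simp only [Finset.mem_insert, Finset.mem_singleton]; omega),
        Finset.sum_insert (by simp only [Finset.mem_singleton]; omega),
        Finset.sum_singleton]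
      ring
    rw [htr]
    have hrec := pw_rec (-2*(n:ℤ)-2)
    have e2 : -2*(n:ℤ)-2+2 = -2*(n:ℤ) := by ring
    have e3 : -2*(n:ℤ)-2+1 = -2*(n:ℤ)-1 := by ring
    rw [e2, e3] at hrec
    linarith
  · rw [evF, if_neg h]
    have hk' : k < 2*n := by omega
    have hdisj : Disjoint (Odds (n:ℤ) k) {2*(n:ℤ)-2*(k:ℤ), -2*(n:ℤ)} := by
      rw [Finset.disjoint_left]
      intro x hx hx2
      rw [Odds_mem'] at hx
      obtain ⟨i, hi, rfl⟩ := hx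
      simp only [Finset.mem_insert, Finset.mem_singleton] at hx2
      omega
    rw [Finset.sum_union hdisj, Odds_sum,
      Finset.sum_pair (by omega : 2*(n:ℤ)-2*(k:ℤ) ≠ -2*(n:ℤ))]
    ring

lemma odF_sum {n k : ℕ} (hn : 1 ≤ n) (hk : k ≤ 2*n) :
    ∑ i ∈ odF n k, pw i = pw (2*(n:ℤ)+1) - pw (-2*(n:ℤ)-1) := by
  by_cases h : k = 2*n
  · rw [odF, if_pos h, Evens_sum]
    congr 2
    push_cast
    ring
  · rw [odF, if_neg h]
    have hk' : k < 2*n := by omega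
    have hdisj : Disjoint (Evens (n:ℤ) k) (Icc (-2*(n:ℤ)-2) (2*((n:ℤ)-(k:ℤ))-1)) := by
      rw [Finset.disjoint_left]
      intro x hx hx2
      rw [Evens_mem'] at hx
      obtain ⟨i, hi, rfl⟩ := hx
      rw [Finset.mem_Icc] at hx2
      omega
    rw [Finset.sum_union hdisj, Evens_sum,
      sum_Icc_pw' _ _ (by omega : -2*(n:ℤ)-2 ≤ 2*((n:ℤ)-(k:ℤ))-1)]
    have e1 : 2*((n:ℤ)-(k:ℤ))-1+2 = 2*((n:ℤ)-(k:ℤ))+1 := by ring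
    have e2 : -2*(n:ℤ)-2+1 = -2*(n:ℤ)-1 := by ring
    rw [e1, e2]
    ring

lemma evF_knott {n k : ℕ} (hn : 1 ≤ n) (hk : k ≤ 2*n) : KnottF (evF n k) := by
  intro m hm
  by_cases h : k = 2*n
  · rw [evF, if_pos h] at hm ⊢
    -- min is -2n-2, and m+2 = -2n ∈ S
    have hmem : -2*(n:ℤ)-2 ∈ Odds (n:ℤ) (2*n) ∪ {(-2*(n:ℤ)), -2*(n:ℤ)-1, -2*(n:ℤ)-2} := by
      simp only [Finset.mem_union, Finset.mem_insert, Finset.mem_singleton]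
      right; right; right; trivial
    have hall : ∀ i ∈ Odds (n:ℤ) (2*n) ∪ {(-2*(n:ℤ)), -2*(n:ℤ)-1, -2*(n:ℤ)-2}, -2*(n:ℤ)-2 ≤ i := by
      intro i hi
      simp only [Finset.mem_union, Finset.mem_insert, Finset.mem_singleton, Odds_mem'] at hi
      rcases hi with ⟨i', hi', rfl⟩ | h | h | h <;> omega
    have hmeq := min_unique hmem hall hm
    rintro ⟨-, hno⟩
    apply hno
    simp only [Finset.mem_union, Finset.mem_insert, Finset.mem_singleton]
    right; left; omega
  · rw [evF, if_neg h] at hm ⊢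
    have hk' : k < 2*n := by omega
    -- min is -2n ; m+1 = -2n+1 ∉ S
    have hmem : -2*(n:ℤ) ∈ Odds (n:ℤ) k ∪ {2*(n:ℤ)-2*(k:ℤ), -2*(n:ℤ)} := by
      simp only [Finset.mem_union, Finset.mem_insert, Finset.mem_singleton]
      right; right; trivial
    have hall : ∀ i ∈ Odds (n:ℤ) k ∪ {2*(n:ℤ)-2*(k:ℤ), -2*(n:ℤ)}, -2*(n:ℤ) ≤ i := by
      intro i hi
      simp only [Finset.mem_union, Finset.mem_insert, Finset.mem_singleton, Odds_mem'] at hi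
      rcases hi with ⟨i', hi', rfl⟩ | h | h <;> omega
    have hmeq := min_unique hmem hall hm
    rintro ⟨hyes, -⟩
    simp only [Finset.mem_union, Finset.mem_insert, Finset.mem_singleton, Odds_mem'] at hyes
    rcases hyes with ⟨i', hi', he⟩ | h | h <;> omega

lemma odF_knott {n k : ℕ} (hn : 1 ≤ n) (hk : k ≤ 2*n) : KnottF (odF n k) := by
  intro m hm
  by_cases h : k = 2*n
  · rw [odF, if_pos h] at hm ⊢
    -- min is -2n ; m+1 = -2n+1 ∉ S
    have hmem : -2*(n:ℤ) ∈ Evens (n:ℤ) (2*n+1) := by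
      rw [Evens_mem']; exact ⟨2*n, by omega, by push_cast; ring⟩
    have hall : ∀ i ∈ Evens (n:ℤ) (2*n+1), -2*(n:ℤ) ≤ i := by
      intro i hi
      rw [Evens_mem'] at hi
      obtain ⟨i', hi', rfl⟩ := hi
      omega
    have hmeq := min_unique hmem hall hm
    rintro ⟨hyes, -⟩
    rw [Evens_mem'] at hyes
    obtain ⟨i', hi', he⟩ := hyes
    omega
  · rw [odF, if_neg h] at hm ⊢
    have hk' : k < 2*n := by omega
    -- min is -2n-2 ; m+2 = -2n ∈ Icc
    have hmem : -2*(n:ℤ)-2 ∈ Evens (n:ℤ) k ∪ Icc (-2*(n:ℤ)-2) (2*((n:ℤ)-(k:ℤ))-1) := by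
      simp only [Finset.mem_union, Finset.mem_Icc]
      right; omega
    have hall : ∀ i ∈ Evens (n:ℤ) k ∪ Icc (-2*(n:ℤ)-2) (2*((n:ℤ)-(k:ℤ))-1), -2*(n:ℤ)-2 ≤ i := by
      intro i hi
      simp only [Finset.mem_union, Finset.mem_Icc, Evens_mem'] at hi
      rcases hi with ⟨i', hi', rfl⟩ | h <;> omega
    have hmeq := min_unique hmem hall hm
    rintro ⟨-, hno⟩
    apply hno
    simp only [Finset.mem_union, Finset.mem_Icc]
    right; omega

lemma evF_card {n k : ℕ} (hn : 1 ≤ n) (hk : k ≤ 2*n) :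
    (evF n k).card = if k = 2*n then 2*n+3 else k+2 := by
  by_cases h : k = 2*n
  · rw [evF, if_pos h, if_pos h]
    rw [Finset.card_union_of_disjoint (by
      rw [Finset.disjoint_left]
      intro x hx hx2
      rw [Odds_mem'] at hx
      obtain ⟨i, hi, rfl⟩ := hx
      simp only [Finset.mem_insert, Finset.mem_singleton] at hx2
      omega)]
    rw [Odds_card]
    have : ({(-2*(n:ℤ)), -2*(n:ℤ)-1, -2*(n:ℤ)-2} : Finset ℤ).card = 3 := by
      rw [Finset.card_insert_of_notMem (by simp only [Finset.mem_insert, Finset.mem_singleton]; omega),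
        Finset.card_insert_of_notMem (by simp only [Finset.mem_singleton]; omega),
        Finset.card_singleton]
    omega
  · rw [evF, if_neg h, if_neg h]
    have hk' : k < 2*n := by omega
    rw [Finset.card_union_of_disjoint (by
      rw [Finset.disjoint_left]
      intro x hx hx2
      rw [Odds_mem'] at hx
      obtain ⟨i, hi, rfl⟩ := hx
      simp only [Finset.mem_insert, Finset.mem_singleton] at hx2
      omega)]
    rw [Odds_card, Finset.card_pair (by omega : 2*(n:ℤ)-2*(k:ℤ) ≠ -2*(n:ℤ))]

lemma odF_card {n k : ℕ} (hn : 1 ≤ n) (hk : k ≤ 2*n) :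
    (odF n k).card = if k = 2*n then 2*n+1 else 4*n+2-k := by
  by_cases h : k = 2*n
  · rw [odF, if_pos h, if_pos h, Evens_card]
  · rw [odF, if_neg h, if_neg h]
    have hk' : k < 2*n := by omega
    rw [Finset.card_union_of_disjoint (by
      rw [Finset.disjoint_left]
      intro x hx hx2
      rw [Evens_mem'] at hx
      obtain ⟨i, hi, rfl⟩ := hx
      rw [Finset.mem_Icc] at hx2
      omega)]
    rw [Evens_card, Int.card_Icc]
    have : (2*((n:ℤ)-(k:ℤ))-1 + 1 - (-2*(n:ℤ)-2)) = ((4*n+2-2*k : ℕ) : ℤ) := by push_cast; omega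
    rw [this, Int.toNat_natCast]
    omega



lemma evClass {n : ℕ} (hn : 1 ≤ n) {S : Finset ℤ}
    (hsum : ∑ i ∈ S, pw i = pw (2*(n:ℤ)) + pw (-2*(n:ℤ)))
    (hkn : KnottF S) : ∃ k, k ≤ 2*n ∧ S = evF n k := by
  have e0 : (1 - (n:ℤ) + ((2*n-1:ℕ):ℤ)) = (n:ℤ) := by omega
  have hsum' : ∑ i ∈ S, pw i = pw (2*(1-(n:ℤ)+((2*n-1:ℕ):ℤ))) + pw (-2*(n:ℤ)) := by
    rw [e0]; exact hsum
  rcases E3 (n:ℤ) (2*n-1) S hsum' with ⟨k, j, hkd, hS⟩ | ⟨j, hj1, hS⟩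
  · rw [e0] at hS
    -- force j = 0
    have hj0 : j = 0 := by
      by_contra hj
      have hj1 : 1 ≤ j := by omega
      have hsub : Dset (-2*(n:ℤ)) j ⊆ S := by
        rw [hS]; intro x hx
        exact Finset.mem_union_right _ (Finset.mem_insert_of_mem hx)
      have habove : ∀ i ∈ S, i ∉ Dset (-2*(n:ℤ)) j → -2*(n:ℤ) ≤ i := by
        intro i hi hnot
        rw [hS] at hi
        rcases Finset.mem_union.mp hi with h1 | h1
        · rw [Odds_mem'] at h1; obtain ⟨i', hi', rfl⟩ := h1; omega
        · rcases Finset.mem_insert.mp h1 with rfl | h2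
          · omega
          · exact absurd h2 hnot
      rcases Nat.lt_or_ge j 2 with hj2 | hj2
      · have hjeq : j = 1 := by omega
        rw [hjeq] at hsub habove
        refine absurd (kill₁ hkn hsub habove ?_) not_false
        rw [hS]
        intro hmem
        rcases Finset.mem_union.mp hmem with h1 | h1
        · rw [Odds_mem'] at h1; obtain ⟨i', hi', he⟩ := h1; omega
        · rcases Finset.mem_insert.mp h1 with he | h2
          · omega
          · rw [hjeq] at h2
            have := Dset_mem_le' (le_refl 1) h2; omega
      · exact absurd (kill₂ hj2 hkn hsub habove) not_false
    refine ⟨k, by omega, ?_⟩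
    rw [evF, if_neg (by omega : ¬ k = 2*n), hS, hj0, Dset_zero]
  · rw [e0] at hS
    -- force j = 1
    have hjeq : j = 1 := by
      by_contra hj
      have hj2 : 2 ≤ j := by omega
      have hsub : Dset (-2*(n:ℤ)) j ⊆ S := by
        rw [hS]; intro x hx
        exact Finset.mem_union_right _ (Finset.mem_insert_of_mem hx)
      have habove : ∀ i ∈ S, i ∉ Dset (-2*(n:ℤ)) j → -2*(n:ℤ) ≤ i := by
        intro i hi hnot
        rw [hS] at hi
        rcases Finset.mem_union.mp hi with h1 | h1
        · rw [Odds_mem'] at h1; obtain ⟨i', hi', rfl⟩ := h1; omega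
        · rcases Finset.mem_insert.mp h1 with rfl | h2
          · omega
          · exact absurd h2 hnot
      exact absurd (kill₂ hj2 hkn hsub habove) not_false
    refine ⟨2*n, le_refl _, ?_⟩
    rw [evF, if_pos rfl, hS, hjeq, Dset_one]
    have : (2*n-1)+1 = 2*n := by omega
    rw [this]

lemma odClass {n : ℕ} (hn : 1 ≤ n) {S : Finset ℤ}
    (hsum : ∑ i ∈ S, pw i = pw (2*(n:ℤ)+1) - pw (-2*(n:ℤ)-1))
    (hkn : KnottF S) : ∃ k, k ≤ 2*n ∧ S = odF n k := by
  have e0 : (((2*n:ℕ):ℤ) - (n:ℤ)) = (n:ℤ) := by push_cast; ring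
  have hsum' : ∑ i ∈ S, pw i = pw (2*(((2*n:ℕ):ℤ)-(n:ℤ))+1) - pw (-2*(n:ℤ)-1) := by
    rw [e0]; exact hsum
  rcases OFr (n:ℤ) (2*n) S hsum' with ⟨j, hS⟩ | ⟨k, j, hke, hj1, hS⟩
  · rw [e0] at hS
    -- force j = 0
    have hj0 : j = 0 := by
      by_contra hj
      have hj1 : 1 ≤ j := by omega
      have hsub : Dset (-2*(n:ℤ)) j ⊆ S := by
        rw [hS]; intro x hx
        exact Finset.mem_union_right _ hx
      have habove : ∀ i ∈ S, i ∉ Dset (-2*(n:ℤ)) j → -2*(n:ℤ) ≤ i := by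
        intro i hi hnot
        rw [hS] at hi
        rcases Finset.mem_union.mp hi with h1 | h1
        · rw [Evens_mem'] at h1; obtain ⟨i', hi', rfl⟩ := h1; omega
        · exact absurd h1 hnot
      rcases Nat.lt_or_ge j 2 with hj2 | hj2
      · have hjeq : j = 1 := by omega
        rw [hjeq] at hsub habove
        refine absurd (kill₁ hkn hsub habove ?_) not_false
        rw [hS]
        intro hmem
        rcases Finset.mem_union.mp hmem with h1 | h1
        · rw [Evens_mem'] at h1; obtain ⟨i', hi', he⟩ := h1; omega
        · rw [hjeq] at h1
          have := Dset_mem_le' (le_refl 1) h1; omega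
      · exact absurd (kill₂ hj2 hkn hsub habove) not_false
    refine ⟨2*n, le_refl _, ?_⟩
    rw [odF, if_pos rfl, hS, hj0, Dset_zero, Evens_bot]
    have : 2*(n:ℤ) - 2*((2*n:ℕ):ℤ) = -2*(n:ℤ) := by push_cast; ring
    rw [this]
  · rw [e0] at hS
    -- force j = 1
    have hjeq : j = 1 := by
      by_contra hj
      have hj2 : 2 ≤ j := by omega
      have hsub : Dset (-2*(n:ℤ)) j ⊆ S := by
        rw [hS]; intro x hx
        exact Finset.mem_union_right _ (Finset.mem_union_right _ hx)
      have habove : ∀ i ∈ S, i ∉ Dset (-2*(n:ℤ)) j → -2*(n:ℤ) ≤ i := by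
        intro i hi hnot
        rw [hS] at hi
        rcases Finset.mem_union.mp hi with h1 | h1
        · rw [Evens_mem'] at h1; obtain ⟨i', hi', rfl⟩ := h1; omega
        · rcases Finset.mem_union.mp h1 with h2 | h2
          · rw [Finset.mem_Icc] at h2; omega
          · exact absurd h2 hnot
      exact absurd (kill₂ hj2 hkn hsub habove) not_false
    refine ⟨k, by omega, ?_⟩
    rw [odF, if_neg (by omega : ¬ k = 2*n), hS, hjeq, Dset_one]
    congr 1
    ext x
    simp only [Finset.mem_union, Finset.mem_Icc, Finset.mem_insert, Finset.mem_singleton]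
    omega


/-- Lucas numbers in terms of powers of φ -/
lemma lucas_pw : ∀ m : ℕ, (lucasNum m : ℝ) = pw m + (-1)^m * pw (-(m:ℤ)) := by
  intro m
  induction m using Nat.strong_induction_on with
  | _ m ih =>
    match m with
    | 0 => simp [lucasNum, pw_zero]; norm_num
    | 1 =>
      have h := pw_rec (-1)
      have e1 : (-1:ℤ) + 2 = 1 := by ring
      have e2 : (-1:ℤ) + 1 = 0 := by ring
      rw [e1, e2, pw_zero] at h
      show ((1:ℕ):ℝ) = pw 1 + (-1)^1 * pw (-(1:ℤ))
      push_cast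
      rw [show -(1:ℤ) = -1 from rfl]
      linarith
    | (m+2) =>
      have h1 := ih (m+1) (by omega)
      have h2 := ih m (by omega)
      have hl : ((lucasNum (m+2) : ℕ) : ℝ) = ((lucasNum (m+1) : ℕ) : ℝ) + ((lucasNum m : ℕ) : ℝ) := by
        rw [show lucasNum (m+2) = lucasNum (m+1) + lucasNum m from rfl]
        push_cast; ring
      rw [hl, h1, h2]
      have hr1 := pw_rec (m:ℤ)
      have hr2 := pw_rec (-(m:ℤ)-2)
      have e3 : (-(m:ℤ)-2) + 2 = -(m:ℤ) := by ring
      have e4 : (-(m:ℤ)-2) + 1 = -((m:ℤ)+1) := by ring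
      rw [e3, e4] at hr2
      push_cast
      set q : ℝ := (-1)^m with hq
      have s1 : (-1:ℝ)^(m+1) = -q := by rw [hq, pow_succ]; ring
      have s2 : (-1:ℝ)^(m+2) = q := by rw [hq, pow_succ, pow_succ]; ring
      rw [s1, s2]
      have hq2 : q * pw (-(m:ℤ)) = q * (pw (-((m:ℤ)+1)) + pw (-(m:ℤ)-2)) := by rw [hr2]
      have e9 : -((m:ℤ)+2) = -(m:ℤ)-2 := by ring
      rw [e9]
      ring_nf
      ring_nf at hq2 hr1
      linarith [hq2, hr1]

lemma lucas_pw_even (n : ℕ) : ((lucasNum (2*n) : ℕ) : ℝ) = pw (2*(n:ℤ)) + pw (-2*(n:ℤ)) := by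
  have := lucas_pw (2*n)
  rw [this]
  have e1 : ((2*n:ℕ):ℤ) = 2*(n:ℤ) := by push_cast; ring
  have e2 : (-1:ℝ)^(2*n) = 1 := by rw [pow_mul]; norm_num
  rw [e1, e2]
  have e3 : -(2*(n:ℤ)) = -2*(n:ℤ) := by ring
  rw [e3]
  ring

lemma lucas_pw_odd (n : ℕ) : ((lucasNum (2*n+1) : ℕ) : ℝ) = pw (2*(n:ℤ)+1) - pw (-2*(n:ℤ)-1) := by
  have := lucas_pw (2*n+1)
  rw [this]
  have e1 : ((2*n+1:ℕ):ℤ) = 2*(n:ℤ)+1 := by push_cast; ring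
  have e2 : (-1:ℝ)^(2*n+1) = -1 := by rw [pow_succ, pow_mul]; norm_num
  rw [e1, e2]
  have e3 : -(2*(n:ℤ)+1) = -2*(n:ℤ)-1 := by ring
  rw [e3]
  ring

/-- indicator finsupp of a finset -/
def ind (S : Finset ℤ) : ℤ →₀ ℕ :=
  ⟨S, fun i => if i ∈ S then 1 else 0, by intro a; by_cases h : a ∈ S <;> simp [h]⟩

lemma ind_support (S : Finset ℤ) : (ind S).support = S := rfl
lemma ind_apply (S : Finset ℤ) (i : ℤ) : ind S i = if i ∈ S then 1 else 0 := rfl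
lemma ind_injective : Function.Injective ind := by
  intro S T h
  have := congrArg Finsupp.support h
  rwa [ind_support, ind_support] at this

lemma knottSet_eq (N : ℕ) :
    KnottSet N = ind '' {S : Finset ℤ | (∑ i ∈ S, pw i = (N:ℝ)) ∧ KnottF S} := by
  ext a
  constructor
  · rintro ⟨⟨hle, hsum⟩, hkn⟩
    refine ⟨a.support, ⟨?_, ?_⟩, ?_⟩
    · rw [hsum]
      apply Finset.sum_congr rfl
      intro i hi
      have h1 : a i ≠ 0 := Finsupp.mem_support_iff.mp hi
      have h1' := hle i
      have h2 : a i = 1 := by omega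
      rw [h2, pw]
      norm_num
    · intro m hm
      rintro ⟨h1, h2⟩
      refine hkn m hm ⟨?_, ?_⟩
      · have := hle (m+1)
        have h3 : a (m+1) ≠ 0 := Finsupp.mem_support_iff.mp h1
        omega
      · exact Finsupp.notMem_support_iff.mp h2
    · -- ind a.support = a
      ext i
      rw [ind_apply]
      by_cases h : i ∈ a.support
      · rw [if_pos h]
        have h1 : a i ≠ 0 := Finsupp.mem_support_iff.mp h
        have := hle i
        omega
      · rw [if_neg h]
        exact (Finsupp.notMem_support_iff.mp h).symm
  · rintro ⟨S, ⟨hsum, hkn⟩, rfl⟩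
    refine ⟨⟨?_, ?_⟩, ?_⟩
    · intro i
      rw [ind_apply]
      split_ifs <;> omega
    · rw [ind_support, ← hsum]
      apply Finset.sum_congr rfl
      intro i hi
      rw [ind_apply, if_pos hi, pw]
      norm_num
    · intro m hm
      rw [ind_support] at hm
      rintro ⟨h1, h2⟩
      refine hkn m hm ⟨?_, ?_⟩
      · rw [ind_apply] at h1
        by_contra h
        rw [if_neg h] at h1
        exact absurd h1 (by norm_num)
      · rw [ind_apply] at h2
        intro h
        rw [if_pos h] at h2
        exact absurd h2 (by norm_num)

/-- The number of Knott base-phi expansions of the Lucas numbers `L_{2n}` and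
`L_{2n+1}` is `2n + 1` in both cases. -/
theorem card_knottSet_lucas (n : ℕ) (hn : 1 ≤ n) :
    (KnottSet (lucasNum (2 * n))).Finite ∧
    (KnottSet (lucasNum (2 * n))).ncard = 2 * n + 1 ∧
    (KnottSet (lucasNum (2 * n + 1))).Finite ∧
    (KnottSet (lucasNum (2 * n + 1))).ncard = 2 * n + 1 := by
  have heq1 : {S : Finset ℤ | (∑ i ∈ S, pw i = ((lucasNum (2*n) : ℕ) : ℝ)) ∧ KnottF S}
      = ↑((range (2*n+1)).image (evF n)) := by
    ext S
    simp only [Set.mem_setOf_eq, Finset.coe_image, Set.mem_image, Finset.mem_coe,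
      Finset.mem_range]
    constructor
    · rintro ⟨hsum, hkn⟩
      rw [lucas_pw_even] at hsum
      obtain ⟨k, hk, rfl⟩ := evClass hn hsum hkn
      exact ⟨k, by omega, rfl⟩
    · rintro ⟨k, hk, rfl⟩
      rw [lucas_pw_even]
      exact ⟨evF_sum hn (by omega), evF_knott hn (by omega)⟩
  have heq2 : {S : Finset ℤ | (∑ i ∈ S, pw i = ((lucasNum (2*n+1) : ℕ) : ℝ)) ∧ KnottF S}
      = ↑((range (2*n+1)).image (odF n)) := by
    ext S
    simp only [Set.mem_setOf_eq, Finset.coe_image, Set.mem_image, Finset.mem_coe,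
      Finset.mem_range]
    constructor
    · rintro ⟨hsum, hkn⟩
      rw [lucas_pw_odd] at hsum
      obtain ⟨k, hk, rfl⟩ := odClass hn hsum hkn
      exact ⟨k, by omega, rfl⟩
    · rintro ⟨k, hk, rfl⟩
      rw [lucas_pw_odd]
      exact ⟨odF_sum hn (by omega), odF_knott hn (by omega)⟩
  have hire1 : Finset.card ((range (2*n+1)).image (evF n)) = 2*n+1 := by
    rw [Finset.card_image_of_injOn, Finset.card_range]
    intro k1 h1 k2 h2 h
    rw [Finset.mem_coe, Finset.mem_range] at h1 h2
    have := congrArg Finset.card h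
    rw [evF_card hn (by omega), evF_card hn (by omega)] at this
    split_ifs at this <;> omega
  have hire2 : Finset.card ((range (2*n+1)).image (odF n)) = 2*n+1 := by
    rw [Finset.card_image_of_injOn, Finset.card_range]
    intro k1 h1 k2 h2 h
    rw [Finset.mem_coe, Finset.mem_range] at h1 h2
    have := congrArg Finset.card h
    rw [odF_card hn (by omega), odF_card hn (by omega)] at this
    split_ifs at this <;> omega
  have kq1 : KnottSet (lucasNum (2*n)) = ind '' ↑((range (2*n+1)).image (evF n)) := by
    rw [knottSet_eq, heq1]
  have kq2 : KnottSet (lucasNum (2*n+1)) = ind '' ↑((range (2*n+1)).image (odF n)) := by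
    rw [knottSet_eq, heq2]
  refine ⟨?_, ?_, ?_, ?_⟩
  · rw [kq1]; exact (Finset.finite_toSet _).image _
  · rw [kq1, Set.ncard_image_of_injective _ ind_injective, Set.ncard_coe_finset, hire1]
  · rw [kq2]; exact (Finset.finite_toSet _).image _
  · rw [kq2, Set.ncard_image_of_injective _ ind_injective, Set.ncard_coe_finset, hire2]
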